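/- Let q ∈ (0,1). Let λ : ℝ → ℝ be continuous and nonnegative on [0,1] with λ(0) = 0, λ(1) = 1 and L := ∫₀¹ λ(t)dt > 0, and set λ̃(x) := (∫₀ˣ λ(t)dt)/L. Let ρ : ℝ → ℝ be continuous on [0,1]. If for every x ∈ [0,1] the fixed-point equation 1 - ρ( 1 - ( q/(1-(1-q)·λ̃(x)) )²·λ(x) ) = x holds, then ∫₀¹ ρ(t)dt = q·∫₀¹ λ(t)dt; equivalently, the design rate R := 1 - (∫₀¹ ρ(t)dt)/(∫₀¹ λ(t)dt) equals 1 - q. -/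

import Mathlib

open MeasureTheory Set intervalIntegral

/-- Area under a decreasing bijection equals area under its inverse. -/
lemma area_swap_aux (g psi : ℝ → ℝ) (hgM : Measurable g) (hpsiM : Measurable psi)
    (hgInt : IntegrableOn g (Set.Ioc 0 1)) (hpsiInt : IntegrableOn psi (Set.Ioc 0 1))
    (hg01 : ∀ x ∈ Set.Icc (0:ℝ) 1, g x ∈ Set.Icc (0:ℝ) 1)
    (hpsi01 : ∀ x ∈ Set.Icc (0:ℝ) 1, psi x ∈ Set.Icc (0:ℝ) 1)
    (hiff : ∀ x ∈ Set.Icc (0:ℝ) 1, ∀ y ∈ Set.Icc (0:ℝ) 1, (y < g x ↔ x < psi y)) :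
    ∫ y in Set.Ioc (0:ℝ) 1, g y = ∫ y in Set.Ioc (0:ℝ) 1, psi y := by
  have hzero : IntegrableOn (fun _ : ℝ => (0:ℝ)) (Set.Ioc 0 1) := integrableOn_const (by simp) (by simp)
  have hgle : ∀ x ∈ Set.Ioc (0:ℝ) 1, (fun _ : ℝ => (0:ℝ)) x ≤ g x := fun x hx =>
    (hg01 x (Ioc_subset_Icc_self hx)).1
  have hpsile : ∀ x ∈ Set.Ioc (0:ℝ) 1, (fun _ : ℝ => (0:ℝ)) x ≤ psi x := fun x hx =>
    (hpsi01 x (Ioc_subset_Icc_self hx)).1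
  have hA := volume_regionBetween_eq_integral (μ := volume) hzero hgInt measurableSet_Ioc hgle
  have hB := volume_regionBetween_eq_integral (μ := volume) hzero hpsiInt measurableSet_Ioc hpsile
  have hBmeas : MeasurableSet (regionBetween (fun _ : ℝ => (0:ℝ)) psi (Set.Ioc 0 1)) :=
    measurableSet_regionBetween measurable_const hpsiM measurableSet_Ioc
  have hswap : Prod.swap ⁻¹' (regionBetween (fun _ : ℝ => (0:ℝ)) psi (Set.Ioc 0 1))
      = regionBetween (fun _ : ℝ => (0:ℝ)) g (Set.Ioc 0 1) := by
    ext ⟨x, y⟩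
    simp only [regionBetween, Set.mem_preimage, Prod.swap_prod_mk, Set.mem_setOf_eq,
      Set.mem_Ioc, Set.mem_Ioo]
    constructor
    · rintro ⟨⟨hy0, hy1⟩, hx0, hxpsi⟩
      have hx1 : x ≤ 1 := le_trans hxpsi.le (hpsi01 y ⟨hy0.le, hy1⟩).2
      have hx : x ∈ Set.Icc (0:ℝ) 1 := ⟨hx0.le, hx1⟩
      exact ⟨⟨hx0, hx1⟩, hy0, (hiff x hx y ⟨hy0.le, hy1⟩).2 hxpsi⟩
    · rintro ⟨⟨hx0, hx1⟩, hy0, hyg⟩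
      have hy1 : y ≤ 1 := le_trans hyg.le (hg01 x ⟨hx0.le, hx1⟩).2
      have hy : y ∈ Set.Icc (0:ℝ) 1 := ⟨hy0.le, hy1⟩
      exact ⟨⟨hy0, hy1⟩, hx0, (hiff x ⟨hx0.le, hx1⟩ y hy).1 hyg⟩
  have hmapeq : (volume : Measure ℝ).prod volume
        (regionBetween (fun _ : ℝ => (0:ℝ)) g (Set.Ioc 0 1))
      = (volume : Measure ℝ).prod volume
        (regionBetween (fun _ : ℝ => (0:ℝ)) psi (Set.Ioc 0 1)) := by
    rw [← hswap]
    rw [← Measure.map_apply measurable_swap hBmeas, Measure.prod_swap]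
  simp only [Pi.sub_apply, sub_zero] at hA hB
  rw [hA, hB] at hmapeq
  have hIg : 0 ≤ ∫ y in Set.Ioc (0:ℝ) 1, g y := by
    apply setIntegral_nonneg measurableSet_Ioc
    intro x hx; simpa using hgle x hx
  have hIpsi : 0 ≤ ∫ y in Set.Ioc (0:ℝ) 1, psi y := by
    apply setIntegral_nonneg measurableSet_Ioc
    intro x hx; simpa using hpsile x hx
  exact (ENNReal.ofReal_eq_ofReal_iff hIg hIpsi).1 hmapeq

theorem stmt8 (q : ℝ) (hq : q ∈ Set.Ioo (0 : ℝ) 1)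
    (lam rho : ℝ → ℝ)
    (hlamCont : ContinuousOn lam (Set.Icc 0 1))
    (hlamNonneg : ∀ x ∈ Set.Icc (0 : ℝ) 1, 0 ≤ lam x)
    (hlam0 : lam 0 = 0) (hlam1 : lam 1 = 1)
    (hL : 0 < ∫ t in (0 : ℝ)..1, lam t)
    (hrhoCont : ContinuousOn rho (Set.Icc 0 1))
    (hfix : ∀ x ∈ Set.Icc (0 : ℝ) 1,
      1 - rho (1 -
        (q / (1 - (1 - q) * ((∫ t in (0 : ℝ)..x, lam t) / ∫ t in (0 : ℝ)..1, lam t))) ^ 2 *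
          lam x) = x) :
    (∫ t in (0 : ℝ)..1, rho t) = q * ∫ t in (0 : ℝ)..1, lam t ∧
      1 - (∫ t in (0 : ℝ)..1, rho t) / ∫ t in (0 : ℝ)..1, lam t = 1 - q := by
  obtain ⟨hq0, hq1⟩ := hq
  have hq1' : (0:ℝ) < 1 - q := by linarith
  -- the clamping map
  set c : ℝ → ℝ := fun x => max 0 (min 1 x) with hc
  have hcCont : Continuous c := by fun_prop
  have hcmem : ∀ x, c x ∈ Set.Icc (0:ℝ) 1 :=
    fun x => ⟨le_max_left _ _, max_le zero_le_one (min_le_left _ _)⟩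
  have hceq : ∀ x ∈ Set.Icc (0:ℝ) 1, c x = x := by
    intro x hx
    simp only [hc, min_eq_right hx.2, max_eq_right hx.1]
  set lam' : ℝ → ℝ := fun x => lam (c x) with hlam'
  set rho' : ℝ → ℝ := fun x => rho (c x) with hrho'
  have hlam'C : Continuous lam' := hlamCont.comp_continuous hcCont hcmem
  have hrho'C : Continuous rho' := hrhoCont.comp_continuous hcCont hcmem
  have hlam'eq : ∀ x ∈ Set.Icc (0:ℝ) 1, lam' x = lam x := by
    intro x hx; simp only [hlam', hceq x hx]
  have hrho'eq : ∀ x ∈ Set.Icc (0:ℝ) 1, rho' x = rho x := by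
    intro x hx; simp only [hrho', hceq x hx]
  set L : ℝ := ∫ t in (0:ℝ)..1, lam t with hLdef
  have hLpos : (0:ℝ) < L := hL
  have hLne : L ≠ 0 := ne_of_gt hLpos
  -- primitive of lam'
  set F : ℝ → ℝ := fun x => ∫ t in (0:ℝ)..x, lam' t with hFdef
  have hlam'int : ∀ a b : ℝ, IntervalIntegrable lam' volume a b :=
    fun a b => hlam'C.intervalIntegrable a b
  have hFcont : Continuous F := intervalIntegral.continuous_primitive hlam'int 0
  have hFeq : ∀ x ∈ Set.Icc (0:ℝ) 1, F x = ∫ t in (0:ℝ)..x, lam t := by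
    intro x hx
    apply intervalIntegral.integral_congr
    intro t ht
    apply hlam'eq
    have : Set.uIcc (0:ℝ) x ⊆ Set.Icc 0 1 := by
      rw [Set.uIcc_of_le hx.1]
      exact Set.Icc_subset_Icc le_rfl hx.2
    exact this ht
  have hF0 : F 0 = 0 := intervalIntegral.integral_same
  have hF1 : F 1 = L := by rw [hFeq 1 ⟨zero_le_one, le_rfl⟩]
  have hFderiv : ∀ x : ℝ, HasDerivAt F (lam' x) x := fun x =>
    intervalIntegral.integral_hasDerivAt_right (hlam'int 0 x)
      hlam'C.stronglyMeasurable.stronglyMeasurableAtFilter hlam'C.continuousAt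
  have hFmono : MonotoneOn F (Set.Icc 0 1) := by
    intro x hx y hy hxy
    have : F y - F x = ∫ t in x..y, lam' t := by
      simp only [hFdef]
      rw [← intervalIntegral.integral_add_adjacent_intervals (hlam'int 0 x) (hlam'int x y)]
      ring
    have hnn : 0 ≤ ∫ t in x..y, lam' t := by
      apply intervalIntegral.integral_nonneg hxy
      intro u hu
      rw [hlam'eq u ⟨le_trans hx.1 hu.1, le_trans hu.2 hy.2⟩]
      exact hlamNonneg u ⟨le_trans hx.1 hu.1, le_trans hu.2 hy.2⟩
    linarith
  have hFrange : ∀ x ∈ Set.Icc (0:ℝ) 1, F x ∈ Set.Icc 0 L := by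
    intro x hx
    constructor
    · have := hFmono ⟨le_rfl, zero_le_one⟩ hx hx.1
      rwa [hF0] at this
    · have := hFmono hx ⟨zero_le_one, le_rfl⟩ hx.2
      rwa [hF1] at this
  -- denominator
  set D : ℝ → ℝ := fun x => 1 - (1 - q) * (F x / L) with hDdef
  have hDge : ∀ x ∈ Set.Icc (0:ℝ) 1, q ≤ D x := by
    intro x hx
    have h1 : F x / L ≤ 1 := by
      rw [div_le_one hLpos]; exact (hFrange x hx).2
    have h2 : 0 ≤ F x / L := div_nonneg (hFrange x hx).1 hLpos.le
    have : (1 - q) * (F x / L) ≤ (1 - q) * 1 := by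
      apply mul_le_mul_of_nonneg_left h1 hq1'.le
    simp only [hDdef]; nlinarith
  have hDne : ∀ x ∈ Set.Icc (0:ℝ) 1, D x ≠ 0 := fun x hx =>
    ne_of_gt (lt_of_lt_of_le hq0 (hDge x hx))
  have hDcont : Continuous D := by
    apply Continuous.sub continuous_const
    exact continuous_const.mul (hFcont.div_const L)
  have hD0 : D 0 = 1 := by simp [hDdef, hF0]
  have hD1 : D 1 = q := by
    simp only [hDdef, hF1, div_self hLne]; ring
  -- the map g
  set g : ℝ → ℝ := fun x => 1 - (q / D x) ^ 2 * lam' x with hgdef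
  have hgeq : ∀ x ∈ Set.Icc (0:ℝ) 1,
      g x = 1 - (q / (1 - (1 - q) * ((∫ t in (0:ℝ)..x, lam t) / L))) ^ 2 * lam x := by
    intro x hx
    simp only [hgdef, hDdef, hFeq x hx, hlam'eq x hx]
  have hg0 : g 0 = 1 := by
    have : lam' 0 = 0 := by rw [hlam'eq 0 ⟨le_rfl, zero_le_one⟩, hlam0]
    simp [hgdef, this]
  have hg1 : g 1 = 0 := by
    have : lam' 1 = 1 := by rw [hlam'eq 1 ⟨zero_le_one, le_rfl⟩, hlam1]
    simp [hgdef, this, hD1, div_self (ne_of_gt hq0)]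
  have hgM : Measurable g := by
    apply Measurable.sub measurable_const
    exact ((measurable_const.div hDcont.measurable).pow_const 2).mul hlam'C.measurable
  have hgCO : ContinuousOn g (Set.Icc 0 1) := by
    apply ContinuousOn.sub continuousOn_const
    apply ContinuousOn.mul _ hlam'C.continuousOn
    apply ContinuousOn.pow
    exact ContinuousOn.div continuousOn_const hDcont.continuousOn hDne
  -- fixed point equation in terms of g
  have hfixg : ∀ x ∈ Set.Icc (0:ℝ) 1, 1 - rho (g x) = x := by
    intro x hx
    rw [hgeq x hx]
    exact hfix x hx
  have hginj : Set.InjOn g (Set.Icc 0 1) := by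
    intro a ha b hb hab
    have h1 := hfixg a ha
    have h2 := hfixg b hb
    rw [hab] at h1
    linarith
  have hanti : StrictAntiOn g (Set.Icc 0 1) :=
    ContinuousOn.strictAntiOn_of_injOn_Icc zero_le_one (by rw [hg0, hg1]; norm_num) hgCO hginj
  have hg01 : ∀ x ∈ Set.Icc (0:ℝ) 1, g x ∈ Set.Icc (0:ℝ) 1 := by
    intro x hx
    constructor
    · have := hanti.antitoneOn hx ⟨zero_le_one, le_rfl⟩ hx.2
      rwa [hg1] at this
    · have := hanti.antitoneOn ⟨le_rfl, zero_le_one⟩ hx hx.1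
      rwa [hg0] at this
  -- psi = inverse of g
  set psi : ℝ → ℝ := fun u => 1 - rho' u with hpsidef
  have hpsiC : Continuous psi := continuous_const.sub hrho'C
  have hpsig : ∀ x ∈ Set.Icc (0:ℝ) 1, psi (g x) = x := by
    intro x hx
    simp only [hpsidef, hrho'eq (g x) (hg01 x hx)]
    exact hfixg x hx
  have hsurj : ∀ u ∈ Set.Icc (0:ℝ) 1, psi u ∈ Set.Icc (0:ℝ) 1 ∧ g (psi u) = u := by
    intro u hu
    have : u ∈ Set.Icc (g 1) (g 0) := by rw [hg0, hg1]; exact hu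
    obtain ⟨x, hx, hgx⟩ := intermediate_value_Icc' zero_le_one hgCO this
    have hpx : psi u = x := by rw [← hgx, hpsig x hx]
    rw [hpx, hgx]
    exact ⟨hx, rfl⟩
  have hiff : ∀ x ∈ Set.Icc (0:ℝ) 1, ∀ y ∈ Set.Icc (0:ℝ) 1, (y < g x ↔ x < psi y) := by
    intro x hx y hy
    obtain ⟨hpy, hgpy⟩ := hsurj y hy
    constructor
    · intro h
      have : g (psi y) < g x := by rw [hgpy]; exact h
      exact (hanti.lt_iff_gt hpy hx).1 this
    · intro h
      have h2 : g (psi y) < g x := hanti hx hpy h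
      rwa [hgpy] at h2
  -- area argument
  have hgInt : IntegrableOn g (Set.Ioc 0 1) :=
    (hgCO.integrableOn_Icc).mono_set Set.Ioc_subset_Icc_self
  have hpsiInt : IntegrableOn psi (Set.Ioc 0 1) :=
    (hpsiC.continuousOn.integrableOn_Icc (a := (0:ℝ)) (b := 1)).mono_set Set.Ioc_subset_Icc_self
  have hpsi01 : ∀ x ∈ Set.Icc (0:ℝ) 1, psi x ∈ Set.Icc (0:ℝ) 1 := fun x hx => (hsurj x hx).1
  have harea : ∫ y in Set.Ioc (0:ℝ) 1, g y = ∫ y in Set.Ioc (0:ℝ) 1, psi y :=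
    area_swap_aux g psi hgM hpsiC.measurable hgInt hpsiInt hg01 hpsi01 hiff
  -- FTC computation of ∫ g
  set C : ℝ := q ^ 2 * L / (1 - q) with hCdef
  set h : ℝ → ℝ := fun x => x - C * (D x)⁻¹ with hhdef
  have hhderiv : ∀ x ∈ Set.uIcc (0:ℝ) 1, HasDerivAt h (g x) x := by
    intro x hx
    rw [Set.uIcc_of_le zero_le_one] at hx
    have hDx : HasDerivAt D (-((1 - q) * (lam' x / L))) x := by
      have h1 : HasDerivAt (fun y => F y / L) (lam' x / L) x := (hFderiv x).div_const L
      have h2 : HasDerivAt (fun y => (1 - q) * (F y / L)) ((1 - q) * (lam' x / L)) x :=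
        h1.const_mul (1 - q)
      simpa using (HasDerivAt.const_sub 1 h2)
    have hDinv : HasDerivAt (fun y => (D y)⁻¹)
        (-(-((1 - q) * (lam' x / L))) / (D x) ^ 2) x := (hDx.inv (hDne x hx))
    have := (hasDerivAt_id x).sub (hDinv.const_mul C)
    convert this using 1
    · rfl
    · rfl
    · rfl
    have hDxne := hDne x hx
    simp only [hgdef, hCdef]
    field_simp
  have hgII : IntervalIntegrable g volume 0 1 := by
    apply ContinuousOn.intervalIntegrable
    rwa [Set.uIcc_of_le zero_le_one]
  have hintg : ∫ x in (0:ℝ)..1, g x = 1 - q * L := by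
    rw [intervalIntegral.integral_eq_sub_of_hasDerivAt hhderiv hgII]
    simp only [hhdef, hD0, hD1, hCdef]
    field_simp
    ring
  -- conclude
  have hrhoII : IntervalIntegrable rho volume 0 1 := by
    apply ContinuousOn.intervalIntegrable
    rwa [Set.uIcc_of_le zero_le_one]
  have hpsieq : ∫ x in (0:ℝ)..1, psi x = 1 - ∫ t in (0:ℝ)..1, rho t := by
    have hrho'II : IntervalIntegrable rho' volume 0 1 := hrho'C.intervalIntegrable 0 1
    have h1 : ∫ x in (0:ℝ)..1, psi x = (∫ x in (0:ℝ)..1, (1:ℝ)) - ∫ x in (0:ℝ)..1, rho' x := by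
      simp only [hpsidef]
      rw [intervalIntegral.integral_sub intervalIntegrable_const hrho'II]
    have h2 : ∫ x in (0:ℝ)..1, rho' x = ∫ t in (0:ℝ)..1, rho t := by
      apply intervalIntegral.integral_congr
      intro t ht
      rw [Set.uIcc_of_le zero_le_one] at ht
      exact hrho'eq t ht
    rw [h1, h2]; simp
  have hgio : ∫ x in (0:ℝ)..1, g x = ∫ y in Set.Ioc (0:ℝ) 1, g y :=
    intervalIntegral.integral_of_le zero_le_one
  have hpsio : ∫ x in (0:ℝ)..1, psi x = ∫ y in Set.Ioc (0:ℝ) 1, psi y :=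
    intervalIntegral.integral_of_le zero_le_one
  have hmain : (∫ t in (0:ℝ)..1, rho t) = q * L := by
    have : 1 - ∫ t in (0:ℝ)..1, rho t = 1 - q * L := by
      rw [← hpsieq, hpsio, ← harea, ← hgio, hintg]
    linarith
  refine ⟨hmain, ?_⟩
  rw [hmain]
  field_simp
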